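/- (Theorem 1) Let n be a positive integer, let R_req and R_max be real numbers with 0 < R_req ≤ R_max < 1, let R_1, …, R_n ∈ (0,1) satisfy ∏_{i=1}^n R_i = R_max, and define the bounds b_i = R_req^{(log R_i)/(log R_max)} and the targets t_i = (∏_{j=1}^{i} b_j) / (∏_{j=1}^{i-1} a_j). If the achieved reliabilities a_1, …, a_n are positive reals satisfying a_i ≥ t_i for every i ∈ {1,…,n}, then ∏_{i=1}^n a_i ≥ R_req; that is, any reliability constraint R_req ≤ R_max can be satisfied by the target-based allocation strategy. -/
import Mathlib


theorem theorem1_constraint_satisfiable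
    (n : ℕ) (hn : 0 < n) (Rreq Rmax : ℝ)
    (hreq : 0 < Rreq) (hle : Rreq ≤ Rmax) (hmax : Rmax < 1)
    (R : ℕ → ℝ) (hR : ∀ i ∈ Finset.Icc 1 n, R i ∈ Set.Ioo (0 : ℝ) 1)
    (hprod : ∏ i ∈ Finset.Icc 1 n, R i = Rmax)
    (b : ℕ → ℝ)
    (hb : ∀ i ∈ Finset.Icc 1 n, b i = Rreq ^ (Real.log (R i) / Real.log Rmax))
    (a : ℕ → ℝ) (hapos : ∀ i ∈ Finset.Icc 1 n, 0 < a i)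
    (t : ℕ → ℝ)
    (ht : ∀ i ∈ Finset.Icc 1 n,
      t i = (∏ j ∈ Finset.Icc 1 i, b j) / ∏ j ∈ Finset.Icc 1 (i - 1), a j)
    (hat : ∀ i ∈ Finset.Icc 1 n, a i ≥ t i) :
    ∏ i ∈ Finset.Icc 1 n, a i ≥ Rreq := by
  have hnmem : n ∈ Finset.Icc 1 n := Finset.mem_Icc.mpr ⟨hn, le_refl n⟩
  -- the product of the b's equals Rreq
  have hlogmax : Real.log Rmax ≠ 0 := by
    have : Real.log Rmax < 0 := Real.log_neg (lt_of_lt_of_le hreq hle) hmax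
    linarith
  have hbprod : ∏ j ∈ Finset.Icc 1 n, b j = Rreq := by
    rw [Finset.prod_congr rfl hb, ← Real.rpow_sum_of_pos hreq]
    rw [← Finset.sum_div]
    have hsum : ∑ i ∈ Finset.Icc 1 n, Real.log (R i) = Real.log Rmax := by
      rw [← hprod, Real.log_prod]
      intro i hi; exact ne_of_gt (hR i hi).1
    rw [hsum, div_self hlogmax, Real.rpow_one]
  -- positivity of the partial product of a's
  have hprodpos : 0 < ∏ j ∈ Finset.Icc 1 (n - 1), a j := by
    apply Finset.prod_pos
    intro j hj
    exact hapos j (Finset.mem_Icc.mpr ⟨(Finset.mem_Icc.mp hj).1,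
      le_trans (Finset.mem_Icc.mp hj).2 (Nat.sub_le n 1)⟩)
  have hlast := hat n hnmem
  rw [ht n hnmem, hbprod, ge_iff_le, div_le_iff₀ hprodpos] at hlast
  have hsplit : ∏ i ∈ Finset.Icc 1 n, a i
      = (∏ j ∈ Finset.Icc 1 (n - 1), a j) * a n := by
    obtain ⟨m, rfl⟩ : ∃ m, n = m + 1 := ⟨n - 1, by omega⟩
    rw [Finset.prod_Icc_succ_top (by omega)]
    simp
  rw [hsplit]
  linarith [mul_comm (a n) (∏ j ∈ Finset.Icc 1 (n - 1), a j)]
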